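/- For every x in the open interval (0, 1/2), there exists an integer n ≥ 1 such that φ^n(x) ≥ 1/2; that is, every trajectory starting in (0, 1/2) eventually escapes the interval (0, 1/2). -/

import Mathlib

/-- The paradoxical map: `φ(x) = x/(1-x)` for `x ∈ (0, 1/2)`, `φ(x) = 2(1-x)` for
`x ∈ [1/2, 1]`, and `φ(x) = 0` otherwise (in particular `φ(0) = 0`). -/
noncomputable def psi (x : ℝ) : ℝ :=
  if 0 < x ∧ x < 1 / 2 then x / (1 - x)
  else if 1 / 2 ≤ x ∧ x ≤ 1 then 2 * (1 - x)
  else 0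

/-- For every `x ∈ (0, 1/2)` there exists `n ≥ 1` with `φ^n(x) ≥ 1/2`:
every trajectory starting in `(0, 1/2)` eventually escapes `(0, 1/2)`. -/
theorem stmt_10 (x : ℝ) (hx : x ∈ Set.Ioo (0 : ℝ) (1 / 2)) :
    ∃ n : ℕ, 1 ≤ n ∧ 1 / 2 ≤ psi^[n] x := by
  obtain ⟨hx0, hx2⟩ := hx
  by_contra h
  push_neg at h
  have key : ∀ n : ℕ, psi^[n] x = x / (1 - n * x) ∧ ((n : ℝ) + 1) * x < 1 := by
    intro n
    induction n with
    | zero => simp; linarith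
    | succ n ih =>
      obtain ⟨h1, h2⟩ := ih
      have hd : (0:ℝ) < 1 - n * x := by nlinarith
      have hpos : 0 < psi^[n] x := by rw [h1]; positivity
      have hlt : psi^[n] x < 1 / 2 := by
        rcases Nat.eq_zero_or_pos n with hn | hn
        · subst hn; simpa using hx2
        · exact h n hn
      have hlt' : 2 * x < 1 - n * x := by
        rw [h1, div_lt_iff₀ hd] at hlt; linarith
      have hstep : psi^[n + 1] x = x / (1 - (n + 1 : ℕ) * x) := by
        rw [Function.iterate_succ_apply', psi, if_pos ⟨hpos, hlt⟩, h1]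
        have hd2 : (0:ℝ) < 1 - (n + 1) * x := by push_cast; linarith
        push_cast
        have hne : (1:ℝ) - n * x ≠ 0 := ne_of_gt hd
        have hne2 : (1:ℝ) - (n + 1) * x ≠ 0 := ne_of_gt hd2
        have : 1 - x / (1 - n * x) = (1 - (n + 1) * x) / (1 - n * x) := by
          rw [one_sub_div hne]; ring
        rw [this, div_div_div_cancel_right₀ hne]
      refine ⟨hstep, by push_cast; linarith⟩
  obtain ⟨n, hn⟩ := exists_nat_gt (1 / x)
  have h2 := (key n).2
  have : (n : ℝ) * x < 1 := by nlinarith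
  rw [div_lt_iff₀ hx0] at hn
  linarith
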